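/- Let X and Y be Banach spaces, let D ⊆ X be a nonempty open connected set, let x₀ ∈ D, set y₀ = f(x₀), and let f : D → Y be a local homeomorphism. Then there exist an open set D_Φ ⊆ D × ℝ and a continuous map Φ : D_Φ → D such that: for every x ∈ D the set I_x := {t ∈ ℝ : (x,t) ∈ D_Φ} is an interval containing 0; Φ(x,0) = x for all x ∈ D; whenever (x,t₁) ∈ D_Φ and (x,t₁+t₂) ∈ D_Φ one has (Φ(x,t₁),t₂) ∈ D_Φ and Φ(Φ(x,t₁),t₂) = Φ(x,t₁+t₂); f(Φ(x,t)) = y₀ + e^{-t}(f(x) − y₀) for all (x,t) ∈ D_Φ; and Φ is maximal, meaning that for every x ∈ D and every continuous ψ : J → D on an interval J containing 0 with ψ(0) = x and f(ψ(t)) = y₀ + e^{-t}(f(x) − y₀) for all t ∈ J, one has J ⊆ I_x and ψ(t) = Φ(x,t) for t ∈ J. -/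
import Mathlib


open Set Filter
open Topology

/-- `f : D → Y` is a local homeomorphism on the open set `D` if every point of `D` has an
open neighbourhood `U ⊆ D` such that `f(U)` is open and `f|U : U → f(U)` is a
homeomorphism. -/
def IsLocalHomeoOn {X Y : Type*} [TopologicalSpace X] [TopologicalSpace Y]
    (f : X → Y) (D : Set X) : Prop :=
  ∀ x ∈ D, ∃ U : Set X, U ⊆ D ∧ IsOpen U ∧ x ∈ U ∧ IsOpen (f '' U) ∧
    ContinuousOn f U ∧ ∃ g : Y → X, ContinuousOn g (f '' U) ∧
      (∀ u ∈ U, g (f u) = u) ∧ ∀ y ∈ f '' U, g y ∈ U ∧ f (g y) = y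

lemma contOn_if_le {α W : Type*} [TopologicalSpace α] [TopologicalSpace W] {s : Set α}
    {φ : α → ℝ} (hφ : Continuous φ) {r : ℝ} {F G : α → W}
    (hF : ContinuousOn F (s ∩ {p | φ p ≤ r})) (hG : ContinuousOn G (s ∩ {p | r ≤ φ p}))
    (heq : ∀ p ∈ s, φ p = r → F p = G p) :
    ContinuousOn (fun p => if φ p ≤ r then F p else G p) s := by
  apply ContinuousOn.if
  · intro a ha
    exact heq a ha.1 (frontier_le_subset_eq hφ continuous_const ha.2)
  · rwa [(isClosed_le hφ continuous_const).closure_eq]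
  · refine hG.mono ?_
    intro p hp
    refine ⟨hp.1, ?_⟩
    have h4 : p ∈ closure {a | r < φ a} := by
      refine closure_mono ?_ hp.2
      intro q hq
      exact not_le.mp hq
    exact closure_lt_subset_le continuous_const hφ h4

lemma lift_unique {X Y : Type*} [TopologicalSpace X] [TopologicalSpace Y] [T2Space X]
    {D : Set X} {f : X → Y} (hf : IsLocalHomeoOn f D) {J : Set ℝ} (hJ : IsPreconnected J)
    {φ₁ φ₂ : ℝ → X} (h₁ : ContinuousOn φ₁ J) (h₂ : ContinuousOn φ₂ J)
    (m₁ : ∀ s ∈ J, φ₁ s ∈ D) (m₂ : ∀ s ∈ J, φ₂ s ∈ D)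
    (hff : ∀ s ∈ J, f (φ₁ s) = f (φ₂ s)) {s₀ : ℝ} (hs₀ : s₀ ∈ J) (he : φ₁ s₀ = φ₂ s₀) :
    ∀ s ∈ J, φ₁ s = φ₂ s := by
  haveI := Subtype.preconnectedSpace hJ
  have hc₁ : Continuous fun p : J => φ₁ p := continuousOn_iff_continuous_restrict.mp h₁
  have hc₂ : Continuous fun p : J => φ₂ p := continuousOn_iff_continuous_restrict.mp h₂
  set S : Set J := {p | φ₁ p = φ₂ p} with hS
  have hSclosed : IsClosed S := isClosed_eq hc₁ hc₂
  have hSopen : IsOpen S := by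
    rw [isOpen_iff_mem_nhds]
    intro p hp
    obtain ⟨U, hUD, hUo, hpU, -, -, g, -, hgf, -⟩ := hf (φ₁ p) (m₁ p p.2)
    have hpU₂ : φ₂ (p : ℝ) ∈ U := by rwa [← hp]
    filter_upwards [inter_mem ((hUo.preimage hc₁).mem_nhds hpU)
      ((hUo.preimage hc₂).mem_nhds hpU₂)] with q hq
    have h3 : g (f (φ₁ q)) = g (f (φ₂ q)) := by rw [hff q q.2]
    rwa [hgf _ hq.1, hgf _ hq.2] at h3
  have huniv : S = univ := IsClopen.eq_univ ⟨hSclosed, hSopen⟩ ⟨⟨s₀, hs₀⟩, he⟩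
  intro s hs
  have : (⟨s, hs⟩ : J) ∈ S := huniv ▸ mem_univ _
  exact this

section Core
variable {X Y : Type*} [NormedAddCommGroup X] [NormedSpace ℝ X]
  [NormedAddCommGroup Y] [NormedSpace ℝ Y]
variable {D : Set X} {f : X → Y}

lemma extend_right (hD : IsOpen D) (hf : IsLocalHomeoOn f D)
    (γ : X → ℝ → Y) (hγ : ContinuousOn (fun p : X × ℝ => γ p.1 p.2) (D ×ˢ (univ : Set ℝ)))
    (hγ0 : ∀ z, γ z 0 = f z)
    {x : X} {b : ℝ} (hb : 0 ≤ b) {ψ : ℝ → X} (hψc : ContinuousOn ψ (Icc 0 b))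
    (hψ0 : ψ 0 = x) (hψ : ∀ s ∈ Icc 0 b, ψ s ∈ D ∧ f (ψ s) = γ x s) :
    ∃ ε > 0, ∃ V : Set X, ∃ F : X → ℝ → X, IsOpen V ∧ x ∈ V ∧ V ⊆ D ∧
      (∀ x' ∈ V, F x' 0 = x') ∧
      ContinuousOn (fun p : X × ℝ => F p.1 p.2) (V ×ˢ Icc 0 (b + ε)) ∧
      ∀ x' ∈ V, ∀ s ∈ Icc 0 (b + ε), F x' s ∈ D ∧ f (F x' s) = γ x' s := by
  have hx : x ∈ D := by have := (hψ 0 ⟨le_refl _, hb⟩).1; rwa [hψ0] at this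
  set Q : ℝ → Prop := fun r => ∃ V : Set X, ∃ F : X → ℝ → X, IsOpen V ∧ x ∈ V ∧ V ⊆ D ∧
      (∀ x' ∈ V, F x' 0 = x') ∧
      ContinuousOn (fun p : X × ℝ => F p.1 p.2) (V ×ˢ Icc 0 r) ∧
      (∀ x' ∈ V, ∀ s ∈ Icc 0 r, F x' s ∈ D ∧ f (F x' s) = γ x' s) with hQdef
  have Qmono : ∀ {r r' : ℝ}, r' ≤ r → Q r → Q r' := by
    rintro r r' hle ⟨V, F, h1, h2, h3, h4, h5, h6⟩
    exact ⟨V, F, h1, h2, h3, h4, h5.mono (prod_mono_right (Icc_subset_Icc_right hle)),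
      fun x' hx' s hs => h6 x' hx' s (Icc_subset_Icc_right hle hs)⟩
  have hQ0 : Q 0 := by
    obtain ⟨U, hUD, hUo, hxU, -, -, -⟩ := hf x hx
    refine ⟨U, fun x' _ => x', hUo, hxU, hUD, fun _ _ => rfl,
      continuous_fst.continuousOn, ?_⟩
    rintro x' hx' s hs
    have hs0 : s = 0 := le_antisymm hs.2 hs.1
    subst hs0
    exact ⟨hUD hx', (hγ0 x').symm⟩
  -- the key continuation step
  have hstep : ∀ m ∈ Icc 0 b, ∃ δ > 0, ∀ r ∈ Icc (m - δ) m, 0 ≤ r → Q r → Q (m + δ) := by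
    intro m hm
    obtain ⟨W, hWD, hWo, hzW, hfWo, -, h, hhc, hhf, hh⟩ := hf (ψ m) (hψ m hm).1
    -- ψ stays in W near m
    have h1 : ψ ⁻¹' W ∈ 𝓝[Icc 0 b] m := hψc m hm (hWo.mem_nhds hzW)
    obtain ⟨δψ, hδψ, hball⟩ := Metric.mem_nhdsWithin_iff.mp h1
    -- γ x stays in f '' W near m
    have hγx : Continuous fun s => γ x s := by
      have := hγ.comp ((continuous_const.prodMk continuous_id).continuousOn
        (s := (univ : Set ℝ))) (fun s _ => ⟨hx, mem_univ _⟩)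
      exact continuousOn_univ.mp this
    have h2 : {s : ℝ | γ x s ∈ f '' W} ∈ 𝓝 m := by
      refine (hfWo.preimage hγx).mem_nhds ?_
      show γ x m ∈ f '' W
      rw [← (hψ m hm).2]
      exact mem_image_of_mem f hzW
    obtain ⟨δγ, hδγ, hballγ⟩ := Metric.mem_nhds_iff.mp h2
    set δ := min δψ δγ / 2 with hδdef
    have hδpos : 0 < δ := by positivity
    have hγmem : ∀ s ∈ Icc (m - δ) (m + δ), γ x s ∈ f '' W := by
      intro s hs
      apply hballγ
      rw [Metric.mem_ball, Real.dist_eq, abs_sub_lt_iff]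
      have h5 : δ < δγ := by
        have h6 : δ < min δψ δγ := by
          rw [hδdef]; linarith [lt_min hδψ hδγ]
        exact h6.trans_le (min_le_right _ _)
      exact ⟨by linarith [hs.2], by linarith [hs.1]⟩
    have hψmem : ∀ s ∈ Icc 0 b, s ∈ Icc (m - δ) (m + δ) → ψ s ∈ W := by
      intro s hs hs'
      apply hball
      refine ⟨?_, hs⟩
      rw [Metric.mem_ball, Real.dist_eq, abs_sub_lt_iff]
      have h5 : δ < δψ := by
        have h6 : δ < min δψ δγ := by rw [hδdef]; linarith [lt_min hδψ hδγ]
        exact h6.trans_le (min_le_left _ _)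
      exact ⟨by linarith [hs'.2], by linarith [hs'.1]⟩
    -- tube lemma for γ around {x} × [m-δ, m+δ]
    have hOopen : IsOpen ((D ×ˢ (univ : Set ℝ)) ∩
        (fun p : X × ℝ => γ p.1 p.2) ⁻¹' (f '' W)) :=
      hγ.isOpen_inter_preimage (hD.prod isOpen_univ) hfWo
    obtain ⟨u, v, huo, hvo, hxu, hIccv, huv⟩ :=
      generalized_tube_lemma isCompact_singleton (isCompact_Icc (a := m - δ) (b := m + δ))
        hOopen (by
          rintro ⟨p1, p2⟩ ⟨hp1, hp2⟩
          rcases mem_singleton_iff.mp hp1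
          exact ⟨⟨hx, mem_univ _⟩, hγmem p2 hp2⟩)
    refine ⟨δ, hδpos, ?_⟩
    rintro r hr hr0 ⟨V, F, hVo, hxV, hVD, hF0, hFc, hFp⟩
    have hrb : r ≤ b := hr.2.trans hm.2
    -- F x agrees with ψ on [0, r]
    have hFxc : ContinuousOn (fun s => F x s) (Icc 0 r) := by
      have := hFc.comp ((continuous_const.prodMk continuous_id).continuousOn
        (s := Icc (0:ℝ) r)) (fun s hs => ⟨hxV, hs⟩)
      exact this
    have hFxψ : ∀ s ∈ Icc 0 r, F x s = ψ s := by
      refine lift_unique hf isPreconnected_Icc hFxc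
        (hψc.mono (Icc_subset_Icc_right hrb))
        (fun s hs => (hFp x hxV s hs).1)
        (fun s hs => (hψ s (Icc_subset_Icc_right hrb hs)).1)
        (fun s hs => ?_) (s₀ := 0) ⟨le_refl _, hr0⟩ (by rw [hF0 x hxV, hψ0])
      rw [(hFp x hxV s hs).2, (hψ s (Icc_subset_Icc_right hrb hs)).2]
    have hψrW : ψ r ∈ W := hψmem r ⟨hr0, hrb⟩ ⟨hr.1, hr.2.trans (by linarith)⟩
    have hFxrW : F x r ∈ W := by rw [hFxψ r ⟨hr0, le_refl _⟩]; exact hψrW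
    -- shrink V so that F x' r ∈ W
    have hGrc : ContinuousOn (fun x' => F x' r) V := by
      exact hFc.comp ((continuous_id.prodMk continuous_const).continuousOn
        (s := V)) (fun x' hx' => ⟨hx', hr0, le_refl _⟩)
    have hV''o : IsOpen (V ∩ (fun x' => F x' r) ⁻¹' W) :=
      hGrc.isOpen_inter_preimage hVo hWo
    set V' := (V ∩ (fun x' => F x' r) ⁻¹' W) ∩ u with hV'def
    have hV'o : IsOpen V' := hV''o.inter huo
    have hxV' : x ∈ V' := ⟨⟨hxV, hFxrW⟩, hxu rfl⟩
    have hV'D : V' ⊆ D := fun x' hx' => hVD hx'.1.1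
    -- the γ-image stays in f '' W on V' × [r, m+δ]
    have hγW : ∀ x' ∈ V', ∀ s ∈ Icc r (m + δ), γ x' s ∈ f '' W := by
      intro x' hx' s hs
      have : ((x', s) : X × ℝ) ∈ u ×ˢ v :=
        ⟨hx'.2, hIccv ⟨le_trans (by linarith [hr.1]) hs.1, hs.2⟩⟩
      exact (huv this).2
    refine ⟨V', fun x' s => if s ≤ r then F x' s else h (γ x' s), hV'o, hxV', hV'D,
      ?_, ?_, ?_⟩
    · intro x' hx'
      show (if (0:ℝ) ≤ r then F x' 0 else h (γ x' 0)) = x'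
      rw [if_pos hr0]
      exact hF0 x' hx'.1.1
    · apply contOn_if_le (continuous_snd)
      · exact hFc.mono (by
          rintro ⟨p1, p2⟩ ⟨⟨hp1, hp2⟩, hp3⟩
          exact ⟨hp1.1.1, hp2.1, hp3⟩)
      · refine (hhc.comp (hγ.mono ?_) ?_)
        · rintro ⟨p1, p2⟩ ⟨⟨hp1, _⟩, _⟩
          exact ⟨hV'D hp1, mem_univ _⟩
        · rintro ⟨p1, p2⟩ ⟨⟨hp1, hp2⟩, hp3⟩
          exact hγW p1 hp1 p2 ⟨hp3, hp2.2⟩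
      · rintro ⟨p1, p2⟩ ⟨hp1, hp2⟩ hp3
        dsimp only at hp3 ⊢
        subst hp3
        have hW : F p1 p2 ∈ W := hp1.1.2
        have := (hFp p1 hp1.1.1 p2 ⟨hp2.1, le_refl _⟩).2
        rw [← this, hhf _ hW]
    · intro x' hx' s hs
      show (if s ≤ r then F x' s else h (γ x' s)) ∈ D ∧
        f (if s ≤ r then F x' s else h (γ x' s)) = γ x' s
      by_cases hsr : s ≤ r
      · rw [if_pos hsr]
        exact hFp x' hx'.1.1 s ⟨hs.1, hsr⟩
      · rw [if_neg hsr]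
        have hmem : γ x' s ∈ f '' W := hγW x' hx' s ⟨(not_le.mp hsr).le, hs.2⟩
        exact ⟨hWD (hh _ hmem).1, (hh _ hmem).2⟩
  -- continuous induction
  set T : Set ℝ := {r | r ∈ Icc 0 (b + 1) ∧ Q r} with hTdef
  have hT0 : (0 : ℝ) ∈ T := ⟨⟨le_refl _, by linarith⟩, hQ0⟩
  have hTbdd : BddAbove T := ⟨b + 1, fun r hr => hr.1.2⟩
  have hTne : T.Nonempty := ⟨0, hT0⟩
  set m := sSup T with hmdef
  have hm0 : 0 ≤ m := le_csSup hTbdd hT0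
  by_cases hmb : m ≤ b
  · exfalso
    obtain ⟨δ, hδpos, hkey⟩ := hstep m ⟨hm0, hmb⟩
    have hrex : ∃ r, r ∈ T ∧ r ∈ Icc (m - δ) m ∧ 0 ≤ r := by
      rcases lt_or_ge (m - δ) 0 with hneg | hpos
      · exact ⟨0, hT0, ⟨hneg.le, hm0⟩, le_refl _⟩
      · obtain ⟨r, hrT, hrlt⟩ := exists_lt_of_lt_csSup hTne (by linarith : m - δ < m)
        exact ⟨r, hrT, ⟨hrlt.le, le_csSup hTbdd hrT⟩, hrT.1.1⟩
    obtain ⟨r, hrT, hrIcc, hr0⟩ := hrex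
    have hQmδ : Q (m + δ) := hkey r hrIcc hr0 hrT.2
    have ht' : min (b + 1) (m + δ) ∈ T := by
      refine ⟨⟨le_min (by linarith) (by linarith), min_le_left _ _⟩,
        Qmono (min_le_right _ _) hQmδ⟩
    have : min (b + 1) (m + δ) ≤ m := le_csSup hTbdd ht'
    have : m < min (b + 1) (m + δ) := lt_min (by linarith) (by linarith)
    linarith
  · push_neg at hmb
    obtain ⟨r, hrT, hrlt⟩ := exists_lt_of_lt_csSup hTne hmb
    obtain ⟨V, F, h1, h2, h3, h4, h5, h6⟩ := hrT.2
    refine ⟨r - b, by linarith, V, F, h1, h2, h3, h4, ?_, ?_⟩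
    · have : b + (r - b) = r := by ring
      rw [this]; exact h5
    · have : b + (r - b) = r := by ring
      rw [this]; exact h6


lemma extend_two (hD : IsOpen D) (hf : IsLocalHomeoOn f D)
    (γ : X → ℝ → Y) (hγ : ContinuousOn (fun p : X × ℝ => γ p.1 p.2) (D ×ˢ (univ : Set ℝ)))
    (hγ0 : ∀ z, γ z 0 = f z)
    {x : X} {a b : ℝ} (ha : a ≤ 0) (hb : 0 ≤ b) {ψ : ℝ → X}
    (hψc : ContinuousOn ψ (Icc a b))
    (hψ0 : ψ 0 = x) (hψ : ∀ s ∈ Icc a b, ψ s ∈ D ∧ f (ψ s) = γ x s) :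
    ∃ ε > 0, ∃ V : Set X, ∃ F : X → ℝ → X, IsOpen V ∧ x ∈ V ∧ V ⊆ D ∧
      (∀ x' ∈ V, F x' 0 = x') ∧
      ContinuousOn (fun p : X × ℝ => F p.1 p.2) (V ×ˢ Icc (a - ε) (b + ε)) ∧
      ∀ x' ∈ V, ∀ s ∈ Icc (a - ε) (b + ε), F x' s ∈ D ∧ f (F x' s) = γ x' s := by
  obtain ⟨ε₁, hε₁, V₁, F₁, hV₁o, hxV₁, hV₁D, hF₁0, hF₁c, hF₁p⟩ :=
    extend_right hD hf γ hγ hγ0 hb (hψc.mono (Icc_subset_Icc ha (le_refl _))) hψ0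
      (fun s hs => hψ s ⟨ha.trans hs.1, hs.2⟩)
  obtain ⟨ε₂, hε₂, V₂, F₂, hV₂o, hxV₂, hV₂D, hF₂0, hF₂c, hF₂p⟩ :=
    extend_right hD hf (fun z s => γ z (-s))
      (by
        have : ContinuousOn ((fun p : X × ℝ => γ p.1 p.2) ∘ fun p : X × ℝ => (p.1, -p.2))
            (D ×ˢ (univ : Set ℝ)) :=
          hγ.comp (continuous_fst.prodMk continuous_snd.neg).continuousOn
            (fun p hp => ⟨hp.1, mem_univ _⟩)
        exact this)
      (fun z => by show γ z (-0) = f z; rw [neg_zero]; exact hγ0 z)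
      (b := -a) (by linarith) (ψ := fun s => ψ (-s))
      (by
        have : ContinuousOn (ψ ∘ fun s : ℝ => -s) (Icc 0 (-a)) :=
          hψc.comp continuous_neg.continuousOn
            (fun s hs => ⟨by linarith [hs.2], by linarith [hs.1]⟩)
        exact this)
      (by show ψ (-0) = x; rw [neg_zero]; exact hψ0)
      (fun s hs => hψ (-s) ⟨by linarith [hs.2], by linarith [hs.1]⟩)
  set ε := min ε₁ ε₂ with hεdef
  have hεpos : 0 < ε := lt_min hε₁ hε₂
  refine ⟨ε, hεpos, V₁ ∩ V₂, fun x' s => if s ≤ 0 then F₂ x' (-s) else F₁ x' s,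
    hV₁o.inter hV₂o, ⟨hxV₁, hxV₂⟩, fun x' hx' => hV₁D hx'.1, ?_, ?_, ?_⟩
  · intro x' hx'
    show (if (0:ℝ) ≤ 0 then F₂ x' (-0) else F₁ x' 0) = x'
    rw [if_pos (le_refl _), neg_zero]
    exact hF₂0 x' hx'.2
  · apply contOn_if_le (continuous_snd) (r := 0)
    · have : ContinuousOn ((fun p : X × ℝ => F₂ p.1 p.2) ∘ fun p : X × ℝ => (p.1, -p.2))
          (((V₁ ∩ V₂) ×ˢ Icc (a - ε) (b + ε)) ∩ {p | p.2 ≤ 0}) := by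
        refine hF₂c.comp (continuous_fst.prodMk continuous_snd.neg).continuousOn ?_
        rintro ⟨p1, p2⟩ ⟨⟨hp1, hp2⟩, hp3⟩
        refine ⟨hp1.2, ⟨by simpa using hp3, ?_⟩⟩
        have : ε ≤ ε₂ := min_le_right _ _
        simp only
        linarith [hp2.1]
      exact this
    · refine hF₁c.mono ?_
      rintro ⟨p1, p2⟩ ⟨⟨hp1, hp2⟩, hp3⟩
      have : ε ≤ ε₁ := min_le_left _ _
      exact ⟨hp1.1, ⟨hp3, by linarith [hp2.2]⟩⟩
    · rintro ⟨p1, p2⟩ ⟨hp1, hp2⟩ hp3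
      dsimp only at hp3 ⊢
      subst hp3
      rw [neg_zero, hF₂0 p1 hp1.2, hF₁0 p1 hp1.1]
  · intro x' hx' s hs
    show (if s ≤ 0 then F₂ x' (-s) else F₁ x' s) ∈ D ∧
      f (if s ≤ 0 then F₂ x' (-s) else F₁ x' s) = γ x' s
    have hε₂' : ε ≤ ε₂ := min_le_right _ _
    have hε₁' : ε ≤ ε₁ := min_le_left _ _
    by_cases hs0 : s ≤ 0
    · rw [if_pos hs0]
      have := hF₂p x' hx'.2 (-s) ⟨by linarith, by linarith [hs.1]⟩
      rwa [neg_neg] at this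
    · rw [if_neg hs0]
      exact hF₁p x' hx'.1 s ⟨by linarith [not_le.mp hs0], by linarith [hs.2]⟩

end Core

noncomputable section FlowDef
variable {X Y : Type*} [NormedAddCommGroup X] [NormedSpace ℝ X]
  [NormedAddCommGroup Y] [NormedSpace ℝ Y]

def liftCurve (f : X → Y) (x₀ : X) (x : X) (t : ℝ) : Y :=
  f x₀ + Real.exp (-t) • (f x - f x₀)

def IsLiftPred (D : Set X) (f : X → Y) (x₀ x : X) (ψ : ℝ → X) (t : ℝ) : Prop :=
  ContinuousOn ψ (uIcc 0 t) ∧ ψ 0 = x ∧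
    ∀ s ∈ uIcc 0 t, ψ s ∈ D ∧ f (ψ s) = liftCurve f x₀ x s

open Classical in
def theFlow (D : Set X) (f : X → Y) (x₀ : X) (x : X) (t : ℝ) : X :=
  if h : ∃ ψ, IsLiftPred D f x₀ x ψ t then h.choose t else x

def theDom (D : Set X) (f : X → Y) (x₀ : X) : Set (X × ℝ) :=
  {p | p.1 ∈ D ∧ ∃ ψ, IsLiftPred D f x₀ p.1 ψ p.2}

lemma uIcc_zero_subset {A B s : ℝ} (hA : A ≤ 0) (hB : 0 ≤ B) (hs : s ∈ Icc A B) :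
    uIcc 0 s ⊆ Icc A B := by
  have h : uIcc (0:ℝ) s = Icc (0 ⊓ s) (0 ⊔ s) := rfl
  rw [h]
  exact Icc_subset_Icc (le_inf hA hs.1) (sup_le hB hs.2)

lemma flow_spec {D : Set X} {f : X → Y} (hf : IsLocalHomeoOn f D) (x₀ : X)
    {x : X} {A B : ℝ} {Ψ : ℝ → X}
    (hA : A ≤ 0) (hB : 0 ≤ B) (hΨc : ContinuousOn Ψ (Icc A B)) (hΨ0 : Ψ 0 = x)
    (hΨ : ∀ s ∈ Icc A B, Ψ s ∈ D ∧ f (Ψ s) = liftCurve f x₀ x s) :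
    ∀ s ∈ Icc A B, (x, s) ∈ theDom D f x₀ ∧ theFlow D f x₀ x s = Ψ s := by
  intro s hs
  have hsub : uIcc 0 s ⊆ Icc A B := uIcc_zero_subset hA hB hs
  have hlift : IsLiftPred D f x₀ x Ψ s := ⟨hΨc.mono hsub, hΨ0, fun u hu => hΨ u (hsub hu)⟩
  have hxD : x ∈ D := by have := (hΨ 0 ⟨hA, hB⟩).1; rwa [hΨ0] at this
  have hex : ∃ ψ, IsLiftPred D f x₀ x ψ s := ⟨Ψ, hlift⟩
  refine ⟨⟨hxD, hex⟩, ?_⟩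
  have hspec := hex.choose_spec
  have heq : theFlow D f x₀ x s = hex.choose s := by
    unfold theFlow; rw [dif_pos hex]
  rw [heq]
  exact lift_unique hf isPreconnected_uIcc hspec.1 hlift.1
    (fun u hu => (hspec.2.2 u hu).1) (fun u hu => (hlift.2.2 u hu).1)
    (fun u hu => by rw [(hspec.2.2 u hu).2, (hlift.2.2 u hu).2])
    (s₀ := 0) left_mem_uIcc (by rw [hspec.2.1, hlift.2.1]) s right_mem_uIcc

end FlowDef

/-- The maximal auxiliary flow `Φ : D_Φ → D` for a map `f : D → Y` at the point `x₀`: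
`D_Φ ⊆ D × ℝ` is open, each section `I_x = {t : (x,t) ∈ D_Φ}` is an interval containing
`0`, `Φ(x,0) = x`, the flow law `Φ(Φ(x,t₁),t₂) = Φ(x,t₁+t₂)` holds,
`f(Φ(x,t)) = f(x₀) + e^{-t}(f(x) - f(x₀))` on `D_Φ`, and `Φ` is maximal among such
liftings. -/
structure AuxFlow {X Y : Type*} [NormedAddCommGroup X] [NormedSpace ℝ X]
    [NormedAddCommGroup Y] [NormedSpace ℝ Y]
    (D : Set X) (f : X → Y) (x₀ : X) where
  dom : Set (X × ℝ)
  flow : X → ℝ → X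
  isOpen_dom : IsOpen dom
  dom_subset : ∀ p ∈ dom, p.1 ∈ D
  zero_mem : ∀ x ∈ D, (x, (0 : ℝ)) ∈ dom
  interval : ∀ x ∈ D, Set.OrdConnected {t : ℝ | (x, t) ∈ dom}
  mem_of_dom : ∀ p ∈ dom, flow p.1 p.2 ∈ D
  continuousOn : ContinuousOn (fun p : X × ℝ => flow p.1 p.2) dom
  flow_zero : ∀ x ∈ D, flow x 0 = x
  flow_add : ∀ (x : X) (t₁ t₂ : ℝ), (x, t₁) ∈ dom → (x, t₁ + t₂) ∈ dom →
    (flow x t₁, t₂) ∈ dom ∧ flow (flow x t₁) t₂ = flow x (t₁ + t₂)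
  lifts : ∀ p ∈ dom, f (flow p.1 p.2) = f x₀ + Real.exp (-p.2) • (f p.1 - f x₀)
  maximal : ∀ x ∈ D, ∀ J : Set ℝ, J.OrdConnected → (0 : ℝ) ∈ J →
    ∀ ψ : ℝ → X, ContinuousOn ψ J → ψ 0 = x →
    (∀ t ∈ J, ψ t ∈ D ∧ f (ψ t) = f x₀ + Real.exp (-t) • (f x - f x₀)) →
    ∀ t ∈ J, (x, t) ∈ dom ∧ ψ t = flow x t

/-- Existence and uniqueness-as-maximality of the auxiliary flow for a local
homeomorphism `f : D → Y` on a nonempty open connected subset of a Banach space. -/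

theorem auxFlow_exists {X Y : Type*}
    [NormedAddCommGroup X] [NormedSpace ℝ X] [CompleteSpace X]
    [NormedAddCommGroup Y] [NormedSpace ℝ Y] [CompleteSpace Y]
    (D : Set X) (hDopen : IsOpen D) (hDne : D.Nonempty) (hDconn : IsConnected D)
    (f : X → Y) (hf : IsLocalHomeoOn f D) (x₀ : X) (hx₀ : x₀ ∈ D) :
    Nonempty (AuxFlow D f x₀) := by
  -- continuity of f on D and of the curve family
  have hfD : ContinuousOn f D := by
    intro z hz
    obtain ⟨U, -, hUo, hzU, -, hfc, -⟩ := hf z hz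
    exact (hfc.continuousAt (hUo.mem_nhds hzU)).continuousWithinAt
  have hγc : ContinuousOn (fun p : X × ℝ => liftCurve f x₀ p.1 p.2)
      (D ×ˢ (univ : Set ℝ)) := by
    refine continuousOn_const.add ?_
    refine ContinuousOn.smul ?_ ?_
    · exact ((Real.continuous_exp.comp continuous_neg).comp continuous_snd).continuousOn
    · exact (hfD.comp continuous_fst.continuousOn (fun p hp => hp.1)).sub continuousOn_const
  have hγ0 : ∀ z : X, liftCurve f x₀ z 0 = f z := by
    intro z; unfold liftCurve; simp
  -- the local existence/continuity of the flow
  have key : ∀ p ∈ theDom D f x₀, ∃ N : Set (X × ℝ), IsOpen N ∧ p ∈ N ∧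
      N ⊆ theDom D f x₀ ∧
      ContinuousAt (fun q : X × ℝ => theFlow D f x₀ q.1 q.2) p := by
    rintro ⟨x, t⟩ ⟨hxD, ψ, hψl⟩
    set A := (0:ℝ) ⊓ t with hAdef
    set B := (0:ℝ) ⊔ t with hBdef
    have hIcc : uIcc (0:ℝ) t = Icc A B := rfl
    obtain ⟨ε, hε, V, F, hVo, hxV, hVD, hF0, hFc, hFp⟩ :=
      extend_two hDopen hf (liftCurve f x₀) hγc hγ0
        (inf_le_left : A ≤ 0) (le_sup_left : 0 ≤ B)
        (hIcc ▸ hψl.1) hψl.2.1 (fun s hs => hψl.2.2 s (hIcc ▸ hs))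
    set N := V ×ˢ Ioo (A - ε) (B + ε) with hNdef
    have hNo : IsOpen N := hVo.prod isOpen_Ioo
    have hpN : ((x, t) : X × ℝ) ∈ N := by
      refine ⟨hxV, ?_, ?_⟩
      · have : A ≤ t := inf_le_right
        linarith
      · have : t ≤ B := le_sup_right
        linarith
    have hA' : A - ε ≤ 0 := by have : A ≤ 0 := inf_le_left; linarith
    have hB' : (0:ℝ) ≤ B + ε := by have : (0:ℝ) ≤ B := le_sup_left; linarith
    have hmem : ∀ q ∈ N, q ∈ theDom D f x₀ ∧
        theFlow D f x₀ q.1 q.2 = F q.1 q.2 := by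
      rintro ⟨x', s⟩ ⟨hx'V, hsIoo⟩
      have hc : ContinuousOn (F x') (Icc (A - ε) (B + ε)) := by
        have : ContinuousOn ((fun p : X × ℝ => F p.1 p.2) ∘ fun s : ℝ => (x', s))
            (Icc (A - ε) (B + ε)) :=
          hFc.comp (continuous_const.prodMk continuous_id).continuousOn
            (fun u hu => ⟨hx'V, hu⟩)
        exact this
      exact flow_spec hf x₀ hA' hB' hc (hF0 x' hx'V) (fun u hu => hFp x' hx'V u hu)
        s ⟨hsIoo.1.le, hsIoo.2.le⟩
    refine ⟨N, hNo, hpN, fun q hq => (hmem q hq).1, ?_⟩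
    have hFcA : ContinuousAt (fun q : X × ℝ => F q.1 q.2) (x, t) :=
      hFc.continuousAt (mem_nhds_iff.mpr
        ⟨N, fun q hq => ⟨hq.1, hq.2.1.le, hq.2.2.le⟩, hNo, hpN⟩)
    have hev : (fun q : X × ℝ => theFlow D f x₀ q.1 q.2) =ᶠ[nhds (x, t)]
        fun q : X × ℝ => F q.1 q.2 :=
      Filter.eventuallyEq_of_mem (hNo.mem_nhds hpN) (fun q hq => (hmem q hq).2)
    exact hFcA.congr hev.symm
  refine ⟨⟨theDom D f x₀, theFlow D f x₀, ?_, ?_, ?_, ?_, ?_, ?_, ?_, ?_, ?_, ?_⟩⟩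
  · -- isOpen_dom
    rw [isOpen_iff_forall_mem_open]
    intro p hp
    obtain ⟨N, hNo, hpN, hNsub, -⟩ := key p hp
    exact ⟨N, hNsub, hNo, hpN⟩
  · -- dom_subset
    exact fun p hp => hp.1
  · -- zero_mem
    intro x hx
    have := flow_spec (Ψ := fun _ => x) hf x₀ (le_refl (0:ℝ)) (le_refl (0:ℝ))
      continuousOn_const rfl (fun s hs => by
        have hs0 : s = 0 := le_antisymm hs.2 hs.1
        subst hs0
        exact ⟨hx, (hγ0 x).symm⟩) 0 ⟨le_refl _, le_refl _⟩
    exact this.1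
  · -- interval
    intro x hx
    rw [Set.ordConnected_iff]
    rintro t₁ h₁ t₂ h₂ h₁₂ z hz
    rcases le_total z 0 with hz0 | hz0
    · obtain ⟨hxD, ψ₁, hl₁⟩ := h₁
      have hzm : z ∈ uIcc (0:ℝ) t₁ := by
        rw [mem_uIcc]
        right
        exact ⟨hz.1, hz0⟩
      have hsub : uIcc (0:ℝ) z ⊆ uIcc (0:ℝ) t₁ :=
        uIcc_subset_uIcc left_mem_uIcc hzm
      exact ⟨hxD, ψ₁, hl₁.1.mono hsub, hl₁.2.1, fun s hs => hl₁.2.2 s (hsub hs)⟩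
    · obtain ⟨hxD, ψ₂, hl₂⟩ := h₂
      have hzm : z ∈ uIcc (0:ℝ) t₂ := by
        rw [mem_uIcc]
        left
        exact ⟨hz0, hz.2⟩
      have hsub : uIcc (0:ℝ) z ⊆ uIcc (0:ℝ) t₂ :=
        uIcc_subset_uIcc left_mem_uIcc hzm
      exact ⟨hxD, ψ₂, hl₂.1.mono hsub, hl₂.2.1, fun s hs => hl₂.2.2 s (hsub hs)⟩
  · -- mem_of_dom
    rintro ⟨x, t⟩ ⟨hxD, ψ, hψl⟩
    have hIcc : uIcc (0:ℝ) t = Icc ((0:ℝ) ⊓ t) ((0:ℝ) ⊔ t) := rfl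
    have := flow_spec hf x₀ (inf_le_left : (0:ℝ) ⊓ t ≤ 0) (le_sup_left : (0:ℝ) ≤ 0 ⊔ t)
      (hIcc ▸ hψl.1) hψl.2.1 (fun s hs => hψl.2.2 s (hIcc ▸ hs)) t
      ⟨inf_le_right, le_sup_right⟩
    rw [this.2]
    exact (hψl.2.2 t right_mem_uIcc).1
  · -- continuousOn
    intro p hp
    obtain ⟨-, -, -, -, hcont⟩ := key p hp
    exact hcont.continuousWithinAt
  · -- flow_zero
    intro x hx
    have := flow_spec (Ψ := fun _ => x) hf x₀ (le_refl (0:ℝ)) (le_refl (0:ℝ))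
      continuousOn_const rfl (fun s hs => by
        have hs0 : s = 0 := le_antisymm hs.2 hs.1
        subst hs0
        exact ⟨hx, (hγ0 x).symm⟩) 0 ⟨le_refl _, le_refl _⟩
    exact this.2
  · -- flow_add
    intro x t₁ t₂ h₁ h₂
    obtain ⟨hxD, ψ₁, hl₁⟩ := h₁
    obtain ⟨-, ψ₂, hl₂⟩ := h₂
    set A := (0:ℝ) ⊓ (t₁ ⊓ (t₁ + t₂)) with hAdef
    set B := (0:ℝ) ⊔ (t₁ ⊔ (t₁ + t₂)) with hBdef
    have hA0 : A ≤ 0 := inf_le_left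
    have hB0 : (0:ℝ) ≤ B := le_sup_left
    have hAt₁ : A ≤ t₁ := le_trans inf_le_right inf_le_left
    have hAt₁₂ : A ≤ t₁ + t₂ := le_trans inf_le_right inf_le_right
    have hBt₁ : t₁ ≤ B := le_trans le_sup_left le_sup_right
    have hBt₁₂ : t₁ + t₂ ≤ B := le_trans le_sup_right le_sup_right
    have hgetlift : ∀ u : ℝ, u = 0 ∨ u = t₁ ∨ u = t₁ + t₂ →
        ∃ ψ, IsLiftPred D f x₀ x ψ u := by
      rintro u (rfl | rfl | rfl)
      · refine ⟨fun _ => x, continuousOn_const, rfl, ?_⟩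
        intro s hs
        rw [uIcc_self, mem_singleton_iff] at hs
        subst hs
        exact ⟨hxD, (hγ0 x).symm⟩
      · exact ⟨ψ₁, hl₁⟩
      · exact ⟨ψ₂, hl₂⟩
    have hAcase : A = 0 ∨ A = t₁ ∨ A = t₁ + t₂ := by
      rcases min_choice (0:ℝ) (t₁ ⊓ (t₁ + t₂)) with h | h
      · exact Or.inl h
      · rcases min_choice t₁ (t₁ + t₂) with h' | h'
        · exact Or.inr (Or.inl (h.trans h'))
        · exact Or.inr (Or.inr (h.trans h'))
    have hBcase : B = 0 ∨ B = t₁ ∨ B = t₁ + t₂ := by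
      rcases max_choice (0:ℝ) (t₁ ⊔ (t₁ + t₂)) with h | h
      · exact Or.inl h
      · rcases max_choice t₁ (t₁ + t₂) with h' | h'
        · exact Or.inr (Or.inl (h.trans h'))
        · exact Or.inr (Or.inr (h.trans h'))
    obtain ⟨ψA, hψA⟩ := hgetlift A hAcase
    obtain ⟨ψB, hψB⟩ := hgetlift B hBcase
    have hIccA : uIcc (0:ℝ) A = Icc A 0 := uIcc_of_ge hA0
    have hIccB : uIcc (0:ℝ) B = Icc 0 B := uIcc_of_le hB0
    set Ψ := fun s => if s ≤ (0:ℝ) then ψA s else ψB s with hΨdef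
    have hΨc : ContinuousOn Ψ (Icc A B) := by
      apply contOn_if_le continuous_id (r := (0:ℝ))
      · refine hψA.1.mono ?_
        rintro s ⟨hs1, hs2⟩
        rw [hIccA]
        exact ⟨hs1.1, hs2⟩
      · refine hψB.1.mono ?_
        rintro s ⟨hs1, hs2⟩
        rw [hIccB]
        exact ⟨hs2, hs1.2⟩
      · intro s hs hs0
        have : s = 0 := hs0
        subst this
        rw [hψA.2.1, hψB.2.1]
    have hΨ0 : Ψ 0 = x := by
      show (if (0:ℝ) ≤ 0 then ψA 0 else ψB 0) = x
      rw [if_pos (le_refl _)]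
      exact hψA.2.1
    have hΨp : ∀ s ∈ Icc A B, Ψ s ∈ D ∧ f (Ψ s) = liftCurve f x₀ x s := by
      intro s hs
      show (if s ≤ (0:ℝ) then ψA s else ψB s) ∈ D ∧
        f (if s ≤ (0:ℝ) then ψA s else ψB s) = liftCurve f x₀ x s
      by_cases hs0 : s ≤ 0
      · rw [if_pos hs0]
        exact hψA.2.2 s (by rw [hIccA]; exact ⟨hs.1, hs0⟩)
      · rw [if_neg hs0]
        exact hψB.2.2 s (by rw [hIccB]; exact ⟨(not_le.mp hs0).le, hs.2⟩)
    have hspec := flow_spec hf x₀ hA0 hB0 hΨc hΨ0 hΨp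
    have ht₁mem : t₁ ∈ Icc A B := ⟨hAt₁, hBt₁⟩
    have hz1 : theFlow D f x₀ x t₁ = Ψ t₁ := (hspec t₁ ht₁mem).2
    have hzD : theFlow D f x₀ x t₁ ∈ D := by rw [hz1]; exact (hΨp t₁ ht₁mem).1
    have hfz : f (theFlow D f x₀ x t₁) = liftCurve f x₀ x t₁ := by
      rw [hz1]; exact (hΨp t₁ ht₁mem).2
    set A₂ := (0:ℝ) ⊓ t₂ with hA₂def
    set B₂ := (0:ℝ) ⊔ t₂ with hB₂def
    have hmap : ∀ s ∈ Icc A₂ B₂, t₁ + s ∈ Icc A B := by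
      intro s hs
      constructor
      · rcases min_choice (0:ℝ) t₂ with h | h
        · have h1 : (0:ℝ) ≤ s := by rw [← h]; exact hs.1
          linarith
        · have h1 : t₂ ≤ s := by rw [← h]; exact hs.1
          linarith
      · rcases max_choice (0:ℝ) t₂ with h | h
        · have h1 : s ≤ 0 := by rw [← h]; exact hs.2
          linarith
        · have h1 : s ≤ t₂ := by rw [← h]; exact hs.2
          linarith
    have hφΨ : ∀ s ∈ Icc A₂ B₂, theFlow D f x₀ x (t₁ + s) = Ψ (t₁ + s) :=
      fun s hs => (hspec (t₁ + s) (hmap s hs)).2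
    have hφc : ContinuousOn (fun s => theFlow D f x₀ x (t₁ + s)) (Icc A₂ B₂) := by
      have h5 : ContinuousOn (fun s => Ψ (t₁ + s)) (Icc A₂ B₂) := by
        have : ContinuousOn (Ψ ∘ fun s : ℝ => t₁ + s) (Icc A₂ B₂) :=
          hΨc.comp (continuous_const.add continuous_id).continuousOn hmap
        exact this
      exact h5.congr hφΨ
    have hφ0 : theFlow D f x₀ x (t₁ + 0) = theFlow D f x₀ x t₁ := by rw [add_zero]
    have hφp : ∀ s ∈ Icc A₂ B₂, theFlow D f x₀ x (t₁ + s) ∈ D ∧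
        f (theFlow D f x₀ x (t₁ + s)) = liftCurve f x₀ (theFlow D f x₀ x t₁) s := by
      intro s hs
      rw [hφΨ s hs]
      refine ⟨(hΨp _ (hmap s hs)).1, ?_⟩
      rw [(hΨp _ (hmap s hs)).2]
      show liftCurve f x₀ x (t₁ + s) = liftCurve f x₀ (theFlow D f x₀ x t₁) s
      unfold liftCurve
      rw [hfz]
      unfold liftCurve
      rw [add_sub_cancel_left, smul_smul, ← Real.exp_add]
      have harith : -s + -t₁ = -(t₁ + s) := by ring
      rw [harith]
    have hfinal := flow_spec hf x₀ (inf_le_left : A₂ ≤ 0) (le_sup_left : (0:ℝ) ≤ B₂)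
      hφc hφ0 hφp t₂ ⟨inf_le_right, le_sup_right⟩
    exact hfinal
  · -- lifts
    rintro ⟨x, t⟩ ⟨hxD, ψ, hψl⟩
    have hIcc : uIcc (0:ℝ) t = Icc ((0:ℝ) ⊓ t) ((0:ℝ) ⊔ t) := rfl
    have := flow_spec hf x₀ (inf_le_left : (0:ℝ) ⊓ t ≤ 0) (le_sup_left : (0:ℝ) ≤ 0 ⊔ t)
      (hIcc ▸ hψl.1) hψl.2.1 (fun s hs => hψl.2.2 s (hIcc ▸ hs)) t
      ⟨inf_le_right, le_sup_right⟩
    rw [this.2]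
    exact (hψl.2.2 t right_mem_uIcc).2
  · -- maximal
    intro x hx J hJoc hJ0 ψ hψc hψ0 hψp t ht
    have hsub : Icc ((0:ℝ) ⊓ t) ((0:ℝ) ⊔ t) ⊆ J := by
      have h1 : uIcc (0:ℝ) t ⊆ J := hJoc.uIcc_subset hJ0 ht
      exact h1
    obtain ⟨hm, he⟩ := flow_spec hf x₀ (inf_le_left : (0:ℝ) ⊓ t ≤ 0)
      (le_sup_left : (0:ℝ) ≤ 0 ⊔ t) (hψc.mono hsub) hψ0
      (fun s hs => hψp s (hsub hs)) t ⟨inf_le_right, le_sup_right⟩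
    exact ⟨hm, he.symm⟩
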